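/- Let q ≥ 1 be a natural number and let 0 < ρ⁻ ≤ m ≤ ρ⁺ be real numbers. Then there exists a constant C > 0 (depending on q, m, ρ⁻, ρ⁺) such that for all X, Y ∈ [ρ⁻ − m, ρ⁺ − m] with X ≠ Y one has ((2q−1)/(2q))·(X^{2q} − Y^{2q})/(X − Y)^{2q−1} + m·(X^{2q−1} − Y^{2q−1})/(X − Y)^{2q−1} ≥ C. -/

import Mathlib

/-- Odd-power binomial inequality: `2 u^(2n+1) ≤ (v+u)^(2n+1) - (v-u)^(2n+1)` for `u ≥ 0`. -/
lemma aux_odd_binom (n : ℕ) (u v : ℝ) (hu : 0 ≤ u) :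
    2 * u ^ (2*n+1) ≤ (v+u)^(2*n+1) - (v-u)^(2*n+1) := by
  set N := 2*n+1 with hN
  have h1 : (v+u)^N = ∑ k ∈ Finset.range (N+1), v^k * u^(N-k) * (N.choose k) := add_pow v u N
  have h2 : (v-u)^N = ∑ k ∈ Finset.range (N+1), v^k * (-u)^(N-k) * (N.choose k) := by
    rw [sub_eq_add_neg]; exact add_pow v (-u) N
  rw [h1, h2, ← Finset.sum_sub_distrib]
  have key : ∀ k ∈ Finset.range (N+1),
      0 ≤ v^k * u^(N-k) * (N.choose k) - v^k * (-u)^(N-k) * (N.choose k) := by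
    intro k hk
    rcases Nat.even_or_odd (N-k) with he | ho
    · rw [he.neg_pow]; simp
    · have hkN : k ≤ N := by
        by_contra h
        have : N - k = 0 := by omega
        rw [this] at ho
        simp at ho
      have hkE : Even k := by
        have hNo : Odd N := ⟨n, by omega⟩
        have := Nat.Odd.sub_odd hNo ho
        have hkk : N - (N - k) = k := by omega
        rwa [hkk] at this
      rw [ho.neg_pow]
      have hv : (0:ℝ) ≤ v^k := hkE.pow_nonneg v
      have hu' : (0:ℝ) ≤ u^(N-k) := pow_nonneg hu _
      have hc : (0:ℝ) ≤ (N.choose k : ℝ) := Nat.cast_nonneg _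
      nlinarith [mul_nonneg (mul_nonneg hv hu') hc]
  have h0 : (2:ℝ) * u^N ≤ v^0 * u^(N-0) * (N.choose 0) - v^0 * (-u)^(N-0) * (N.choose 0) := by
    have hNo : Odd N := ⟨n, by omega⟩
    simp [hNo.neg_pow]
    ring_nf
    simp
  exact le_trans h0 (Finset.single_le_sum key (Finset.mem_range.mpr (by omega)))

lemma aux_odd_pow_sub (n : ℕ) (X Y : ℝ) (h : Y ≤ X) :
    (X-Y)^(2*n+1) ≤ 2^(2*n) * (X^(2*n+1) - Y^(2*n+1)) := by
  have := aux_odd_binom n ((X-Y)/2) ((X+Y)/2) (by linarith)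
  have e1 : (X+Y)/2 + (X-Y)/2 = X := by ring
  have e2 : (X+Y)/2 - (X-Y)/2 = Y := by ring
  rw [e1, e2] at this
  have e3 : (X-Y)^(2*n+1) = 2^(2*n+1) * ((X-Y)/2)^(2*n+1) := by
    rw [div_pow]
    field_simp
  have hp : (0:ℝ) < 2^(2*n) := by positivity
  have h6 := mul_le_mul_of_nonneg_left this (le_of_lt hp)
  rw [e3]
  have e4 : (2:ℝ)^(2*n+1) * ((X-Y)/2)^(2*n+1) = 2^(2*n) * (2 * ((X-Y)/2)^(2*n+1)) := by ring
  rw [e4]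
  exact h6

lemma aux_mono (p : ℕ) (c : ℝ) (hc : 0 ≤ c) (X Y : ℝ) (hY : -c ≤ Y) (hYX : Y ≤ X) :
    (2*(p:ℝ)+1)/(2*(p:ℝ)+2) * Y^(2*p+2) + c * Y^(2*p+1) ≤
    (2*(p:ℝ)+1)/(2*(p:ℝ)+2) * X^(2*p+2) + c * X^(2*p+1) := by
  set c1 := (2*(p:ℝ)+1)/(2*(p:ℝ)+2) with hc1
  set G : ℝ → ℝ := fun t => c1 * t^(2*p+2) + c * t^(2*p+1) with hG
  have mono : MonotoneOn G (Set.Icc (-c) X) := by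
    apply monotoneOn_of_deriv_nonneg (convex_Icc _ _)
    · exact Continuous.continuousOn (by fun_prop)
    · intro t ht
      apply DifferentiableAt.differentiableWithinAt
      fun_prop
    · intro t ht
      rw [interior_Icc] at ht
      have hd : HasDerivAt G (c1 * ((2*p+2 : ℕ) * t^(2*p+1)) + c * ((2*p+1 : ℕ) * t^(2*p))) t := by
        have h1 := (hasDerivAt_pow (2*p+2) t).const_mul c1
        have h2 := (hasDerivAt_pow (2*p+1) t).const_mul c
        have e1 : 2*p+2-1 = 2*p+1 := by omega
        have e2 : 2*p+1-1 = 2*p := by omega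
        rw [e1] at h1
        rw [e2] at h2
        exact h1.add h2
      rw [hd.deriv]
      have htc : 0 ≤ t + c := by
        have := ht.1
        linarith
      have hte : (0:ℝ) ≤ t^(2*p) := (Even.pow_nonneg ⟨p, by ring⟩ t : _)
      have e : c1 * ((2*p+2 : ℕ) * t^(2*p+1)) + c * ((2*p+1 : ℕ) * t^(2*p))
          = (2*(p:ℝ)+1) * t^(2*p) * (t + c) := by
        have h2p2 : (2*(p:ℝ)+2) ≠ 0 := by positivity
        rw [hc1, pow_succ]
        push_cast
        field_simp
      rw [e]
      have h2p1 : (0:ℝ) ≤ 2*(p:ℝ)+1 := by positivity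
      exact mul_nonneg (mul_nonneg h2p1 hte) htc
  exact mono ⟨hY, hYX⟩ ⟨le_trans hY hYX, le_refl X⟩ hYX

/-- Uniform positive lower bound for the symmetrized weight `Ψ_q`: for a natural `q ≥ 1`
and `0 < ρ⁻ ≤ m ≤ ρ⁺`, there is a constant `C > 0` such that for all `X ≠ Y` in
`[ρ⁻ − m, ρ⁺ − m]`,
`((2q−1)/(2q))·(X^{2q} − Y^{2q})/(X − Y)^{2q−1} + m·(X^{2q−1} − Y^{2q−1})/(X − Y)^{2q−1} ≥ C`. -/
theorem symmetrized_weight_uniform_lower_bound (q : ℕ) (hq : 1 ≤ q) (ρm m ρp : ℝ)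
    (h1 : 0 < ρm) (h2 : ρm ≤ m) (h3 : m ≤ ρp) :
    ∃ C : ℝ, 0 < C ∧
      ∀ X Y : ℝ, X ∈ Set.Icc (ρm - m) (ρp - m) → Y ∈ Set.Icc (ρm - m) (ρp - m) → X ≠ Y →
        C ≤ (2 * (q : ℝ) - 1) / (2 * (q : ℝ)) *
              ((X ^ (2 * q) - Y ^ (2 * q)) / (X - Y) ^ (2 * q - 1)) +
            m * ((X ^ (2 * q - 1) - Y ^ (2 * q - 1)) / (X - Y) ^ (2 * q - 1)) := by
  obtain ⟨p, rfl⟩ : ∃ p, q = p + 1 := ⟨q - 1, by omega⟩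
  have eN : 2*(p+1) = 2*p+2 := by ring
  have eK : 2*(p+1) - 1 = 2*p+1 := by omega
  set c1 := (2*(p:ℝ)+1)/(2*(p:ℝ)+2) with hc1
  refine ⟨ρm / 2^(2*p), by positivity, ?_⟩
  have key : ∀ X Y : ℝ, X ∈ Set.Icc (ρm - m) (ρp - m) → Y ∈ Set.Icc (ρm - m) (ρp - m) → Y < X →
      ρm / 2^(2*p) ≤ c1 * ((X ^ (2*p+2) - Y ^ (2*p+2)) / (X - Y) ^ (2*p+1)) +
            m * ((X ^ (2*p+1) - Y ^ (2*p+1)) / (X - Y) ^ (2*p+1)) := by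
    intro X Y hX hY hYX
    have hd : (0:ℝ) < (X - Y)^(2*p+1) := pow_pos (by linarith) _
    rw [mul_div_assoc', mul_div_assoc', ← add_div, le_div_iff₀ hd]
    have hm1 : 0 ≤ c1 * (X^(2*p+2) - Y^(2*p+2)) + (m - ρm) * (X^(2*p+1) - Y^(2*p+1)) := by
      have := aux_mono p (m - ρm) (by linarith) X Y (by linarith [hY.1]) (le_of_lt hYX)
      linarith
    have hm2 : (X-Y)^(2*p+1) ≤ 2^(2*p) * (X^(2*p+1) - Y^(2*p+1)) := aux_odd_pow_sub p X Y (le_of_lt hYX)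
    have hm3 : ρm / 2^(2*p) * (X-Y)^(2*p+1) ≤ ρm * (X^(2*p+1) - Y^(2*p+1)) := by
      have h4 := mul_le_mul_of_nonneg_left hm2 (show (0:ℝ) ≤ ρm / 2^(2*p) by positivity)
      have h5 : ρm / 2^(2*p) * (2^(2*p) * (X^(2*p+1) - Y^(2*p+1))) = ρm * (X^(2*p+1) - Y^(2*p+1)) := by
        field_simp
      linarith
    linarith
  intro X Y hX hY hXY
  have ec : (2 * ((p:ℝ)+1) - 1) / (2 * ((p:ℝ)+1)) = c1 := by rw [hc1]; ring_nf
  rcases lt_or_gt_of_ne hXY with h | h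
  · -- X < Y : use symmetry
    have := key Y X hY hX h
    have hodd : Odd (2*p+1) := ⟨p, by omega⟩
    have eneg : (X - Y)^(2*p+1) = -((Y - X)^(2*p+1)) := by
      rw [show X - Y = -(Y - X) by ring, hodd.neg_pow]
    rw [eK, eN]
    push_cast
    rw [ec, eneg]
    calc ρm / 2^(2*p) ≤ c1 * ((Y ^ (2*p+2) - X ^ (2*p+2)) / (Y - X) ^ (2*p+1)) +
            m * ((Y ^ (2*p+1) - X ^ (2*p+1)) / (Y - X) ^ (2*p+1)) := this
      _ = c1 * ((X ^ (2*p+2) - Y ^ (2*p+2)) / -((Y - X) ^ (2*p+1))) +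
            m * ((X ^ (2*p+1) - Y ^ (2*p+1)) / -((Y - X) ^ (2*p+1))) := by
          rw [div_neg, div_neg]; ring
  · have := key X Y hX hY h
    rw [eK, eN]
    push_cast
    rw [ec]
    exact this
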